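/- Let L be a linear classifier on {0,1}^d with weights w and threshold t, let x ∈ {0,1}^d with scores s_1 ≥ ... ≥ s_d (features sorted decreasingly by score s_i = w_i·(2x_i−1)·(2L(x)−1)), and let y^(k) be the partial instance agreeing with x exactly on the first k coordinates. Then for every k, Pr_{z ∈ comp(y^(k))}[L(z) = L(x)] = max over all partial instances y ⊆ x with exactly k defined coordinates of Pr_{z ∈ comp(y)}[L(z) = L(x)], probabilities taken uniformly over completions. -/

import Mathlib

/-- Output of the linear classifier with weights `w` and threshold `t` on `z ∈ {0,1}^d`. -/
def linOut {d : ℕ} (w : Fin d → ℚ) (t : ℚ) (z : Fin d → Bool) : Bool :=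
  decide (t ≤ ∑ i, w i * (if z i then 1 else 0))

/-- Completions of a partial instance `y ∈ {0,1,⊥}^d`. -/
def completions {d : ℕ} (y : Fin d → Option Bool) : Finset (Fin d → Bool) :=
  Finset.univ.filter (fun z => ∀ i, ∀ b, y i = some b → z i = b)

/-- `Pr_{z ~ U(y)}[L(z) = L(x)]`, uniform over the completions of `y`. -/
def prSame {d : ℕ} (w : Fin d → ℚ) (t : ℚ) (x : Fin d → Bool)
    (y : Fin d → Option Bool) : ℚ :=
  (((completions y).filter (fun z => linOut w t z = linOut w t x)).card : ℚ)
    / ((completions y).card : ℚ)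

/-- Score of feature `i`: `w_i (2x_i - 1)(2L(x) - 1)`. -/
def score {d : ℕ} (w : Fin d → ℚ) (t : ℚ) (x : Fin d → Bool) (i : Fin d) : ℚ :=
  w i * (2 * (if x i then 1 else 0) - 1) * (2 * (if linOut w t x then 1 else 0) - 1)

/-- `y ⊆ x`: the partial instance `y` agrees with `x` on its defined coordinates. -/
def subsetOf {d : ℕ} (y : Fin d → Option Bool) (x : Fin d → Bool) : Prop :=
  ∀ i, ∀ b, y i = some b → x i = b

/-- `topk x k` is the partial instance defined (agreeing with `x`) exactly on the
first `k` coordinates. -/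
def topk {d : ℕ} (x : Fin d → Bool) (k : ℕ) : Fin d → Option Bool :=
  fun i => if (i : ℕ) < k then some (x i) else none

/-- Number of defined coordinates of a partial instance. -/
def definedCount {d : ℕ} (y : Fin d → Option Bool) : ℕ :=
  (Finset.univ.filter (fun i => (y i).isSome)).card

lemma mem_completions {d : ℕ} {y : Fin d → Option Bool} {z : Fin d → Bool} :
    z ∈ completions y ↔ ∀ i, ∀ b, y i = some b → z i = b := by
  simp [completions]

lemma card_lowk {d k : ℕ} (hk : k ≤ d) :
    (Finset.univ.filter fun i : Fin d => (i : ℕ) < k).card = k := by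
  have : (Finset.univ.filter fun i : Fin d => (i : ℕ) < k)
      = Finset.map ⟨Fin.castLE hk, Fin.castLE_injective hk⟩ Finset.univ := by
    ext i
    simp only [Finset.mem_filter, Finset.mem_univ, true_and, Finset.mem_map,
      Function.Embedding.coeFn_mk]
    constructor
    · intro h; exact ⟨⟨(i : ℕ), h⟩, by ext; simp⟩
    · rintro ⟨a, rfl⟩; exact a.2
  rw [this]; simp

section exchange
variable {d : ℕ} (w : Fin d → ℚ) (t : ℚ) (x : Fin d → Bool) (i j : Fin d)

/-- The swap map on completions. -/
def phiMap (z : Fin d → Bool) : Fin d → Bool :=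
  Function.update (Function.update z i (x i)) j (if z i = x i then x j else !(x j))

lemma phi_apply_i (hij : i ≠ j) (z : Fin d → Bool) : phiMap x i j z i = x i := by
  simp [phiMap, Function.update, hij]

lemma phi_apply_j (z : Fin d → Bool) :
    phiMap x i j z j = (if z i = x i then x j else !(x j)) := by
  simp [phiMap, Function.update]

lemma phi_apply_other {l : Fin d} (hli : l ≠ i) (hlj : l ≠ j) (z : Fin d → Bool) :
    phiMap x i j z l = z l := by
  simp [phiMap, Function.update, hli, hlj]

lemma psi_phi (hij : i ≠ j) (z : Fin d → Bool) (hzj : z j = x j) :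
    phiMap x j i (phiMap x i j z) = z := by
  funext l
  by_cases hli : l = i
  · rw [hli]
    rw [phi_apply_j x j i, phi_apply_j x i j]
    cases hxi : x i <;> cases hzi : z i <;> cases hxj : x j <;> simp_all
  · by_cases hlj : l = j
    · rw [hlj]
      rw [phi_apply_i x j i (Ne.symm hij), hzj]
    · rw [phi_apply_other x j i hlj hli, phi_apply_other x i j hli hlj]
end exchange

section main
variable {d : ℕ} (w : Fin d → ℚ) (t : ℚ) (x : Fin d → Bool) (i j : Fin d)

lemma phi_eq_self (hij : i ≠ j) (z : Fin d → Bool) (hzj : z j = x j) (h : z i = x i) :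
    phiMap x i j z = z := by
  funext l
  by_cases hli : l = i
  · rw [hli, phi_apply_i x i j hij, h]
  · by_cases hlj : l = j
    · rw [hlj, phi_apply_j, if_pos h, hzj]
    · rw [phi_apply_other x i j hli hlj]

lemma sum_phi (hij : i ≠ j) (z : Fin d → Bool) (hzj : z j = x j) :
    ∑ l, w l * (if phiMap x i j z l then 1 else 0) =
      (∑ l, w l * (if z l then 1 else 0))
        + (if z i = x i then 0 else
            (w i * (2 * (if x i then 1 else 0) - 1)
              - w j * (2 * (if x j then 1 else 0) - 1))) := by
  by_cases h : z i = x i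
  · rw [phi_eq_self x i j hij z hzj h, if_pos h, add_zero]
  · rw [if_neg h]
    have hzi : z i = !(x i) := by cases hxi : x i <;> simp_all
    have hji : j ∈ Finset.univ.erase i := by
      simp [Finset.mem_erase, Ne.symm hij]
    set f := fun l => w l * (if phiMap x i j z l then (1:ℚ) else 0) with hf
    set g := fun l => w l * (if z l then (1:ℚ) else 0) with hg
    rw [← Finset.add_sum_erase _ f (Finset.mem_univ i),
        ← Finset.add_sum_erase _ g (Finset.mem_univ i),
        ← Finset.add_sum_erase _ f hji, ← Finset.add_sum_erase _ g hji]
    have hsum : ∑ l ∈ (Finset.univ.erase i).erase j, f l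
        = ∑ l ∈ (Finset.univ.erase i).erase j, g l := by
      apply Finset.sum_congr rfl
      intro l hl
      simp only [Finset.mem_erase] at hl
      simp [hf, hg, phi_apply_other x i j hl.2.1 hl.1]
    rw [hsum]
    have h1 : f i = w i * (if x i then 1 else 0) := by
      simp [hf, phi_apply_i x i j hij]
    have h2 : f j = w j * (if (!(x j)) then 1 else 0) := by
      simp [hf, phi_apply_j, h]
    have h3 : g i = w i * (if (!(x i)) then 1 else 0) := by simp [hg, hzi]
    have h4 : g j = w j * (if x j then 1 else 0) := by simp [hg, hzj]
    rw [h1, h2, h3, h4]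
    cases x i <;> cases x j <;> simp <;> ring

lemma lin_phi (hs : score w t x j ≤ score w t x i) (hij : i ≠ j) (z : Fin d → Bool)
    (hzj : z j = x j) (hz : linOut w t z = linOut w t x) :
    linOut w t (phiMap x i j z) = linOut w t x := by
  by_cases hL : t ≤ ∑ l, w l * (if x l then 1 else 0)
  · have hLx : linOut w t x = true := decide_eq_true hL
    rw [hLx] at hz ⊢
    simp only [linOut, decide_eq_true_eq] at hz ⊢
    rw [sum_phi w x i j hij z hzj]
    simp only [score, hLx, if_true] at hs
    by_cases h : z i = x i
    · rw [if_pos h]; linarith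
    · rw [if_neg h]
      cases hxi : x i <;> cases hxj : x j <;>
        rw [hxi, hxj] at hs <;> norm_num at hs hz ⊢ <;> linarith
  · have hLx : linOut w t x = false := decide_eq_false hL
    rw [hLx] at hz ⊢
    simp only [linOut, decide_eq_false_iff_not, not_le] at hz ⊢
    rw [sum_phi w x i j hij z hzj]
    simp only [score, hLx, if_false] at hs
    by_cases h : z i = x i
    · rw [if_pos h]; linarith
    · rw [if_neg h]
      cases hxi : x i <;> cases hxj : x j <;>
        rw [hxi, hxj] at hs <;> norm_num at hs hz ⊢ <;> linarith

end main

section ex2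
variable {d : ℕ} (w : Fin d → ℚ) (t : ℚ) (x : Fin d → Bool) (i j : Fin d)
  (y : Fin d → Option Bool)

/-- The swapped partial instance: define `i` (to agree with `x`), undefine `j`. -/
def swapY : Fin d → Option Bool :=
  Function.update (Function.update y i (some (x i))) j none

lemma swapY_apply_i (hij : i ≠ j) : swapY x i j y i = some (x i) := by
  simp [swapY, Function.update, hij]

lemma swapY_apply_j : swapY x i j y j = none := by
  simp [swapY, Function.update]

lemma swapY_apply_other {l : Fin d} (hli : l ≠ i) (hlj : l ≠ j) :
    swapY x i j y l = y l := by
  simp [swapY, Function.update, hli, hlj]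

lemma phi_mem (hij : i ≠ j) (hyj : y j = some (x j)) {z : Fin d → Bool}
    (hz : z ∈ completions y) : phiMap x i j z ∈ completions (swapY x i j y) := by
  rw [mem_completions] at hz ⊢
  intro l b hl
  by_cases hli : l = i
  · rw [hli] at hl ⊢
    rw [swapY_apply_i x i j y hij] at hl
    rw [phi_apply_i x i j hij]
    exact Option.some_inj.mp hl
  · by_cases hlj : l = j
    · rw [hlj, swapY_apply_j] at hl; exact absurd hl (by simp)
    · rw [swapY_apply_other x i j y hli hlj] at hl
      rw [phi_apply_other x i j hli hlj]
      exact hz l b hl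

lemma psi_mem (hij : i ≠ j) (hyi : y i = none) (hyj : y j = some (x j))
    {z : Fin d → Bool} (hz : z ∈ completions (swapY x i j y)) :
    phiMap x j i z ∈ completions y := by
  rw [mem_completions] at hz ⊢
  have hzi : z i = x i := hz i (x i) (swapY_apply_i x i j y hij)
  intro l b hl
  by_cases hli : l = i
  · rw [hli, hyi] at hl; exact absurd hl (by simp)
  · by_cases hlj : l = j
    · rw [hlj] at hl ⊢
      rw [hyj] at hl
      rw [phi_apply_i x j i (Ne.symm hij)]
      exact Option.some_inj.mp hl
    · rw [phi_apply_other x j i hlj hli]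
      exact hz l b (by rw [swapY_apply_other x i j y hli hlj]; exact hl)

lemma completions_card_swap (hij : i ≠ j) (hyi : y i = none) (hyj : y j = some (x j)) :
    (completions y).card = (completions (swapY x i j y)).card := by
  apply Finset.card_nbij' (phiMap x i j) (phiMap x j i)
  · intro z hz; exact phi_mem x i j y hij hyj hz
  · intro z hz; exact psi_mem x i j y hij hyi hyj hz
  · intro z hz
    have hzj : z j = x j := (mem_completions.mp hz) j (x j) hyj
    exact psi_phi x i j hij z hzj
  · intro z hz
    have hzi : z i = x i := (mem_completions.mp hz) i (x i) (swapY_apply_i x i j y hij)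
    exact psi_phi x j i (Ne.symm hij) z hzi

lemma exchange (hs : score w t x j ≤ score w t x i) (hij : i ≠ j)
    (hy : subsetOf y x) (hyi : y i = none) (hyj : y j = some (x j)) :
    prSame w t x y ≤ prSame w t x (swapY x i j y) := by
  have hx : x ∈ completions y := mem_completions.mpr hy
  have hpos : 0 < ((completions y).card : ℚ) := by
    exact_mod_cast Finset.card_pos.mpr ⟨x, hx⟩
  have hA : ((completions y).filter (fun z => linOut w t z = linOut w t x)).card
      ≤ ((completions (swapY x i j y)).filter
          (fun z => linOut w t z = linOut w t x)).card := by
    apply Finset.card_le_card_of_injOn (phiMap x i j)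
    · intro z hz
      rw [Finset.mem_coe, Finset.mem_filter] at hz ⊢
      have hzj : z j = x j := (mem_completions.mp hz.1) j (x j) hyj
      exact ⟨phi_mem x i j y hij hyj hz.1, lin_phi w t x i j hs hij z hzj hz.2⟩
    · intro z1 h1 z2 h2 heq
      rw [Finset.mem_coe, Finset.mem_filter] at h1 h2
      have hz1 : z1 j = x j := (mem_completions.mp h1.1) j (x j) hyj
      have hz2 : z2 j = x j := (mem_completions.mp h2.1) j (x j) hyj
      calc z1 = phiMap x j i (phiMap x i j z1) := (psi_phi x i j hij z1 hz1).symm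
        _ = phiMap x j i (phiMap x i j z2) := by rw [heq]
        _ = z2 := psi_phi x i j hij z2 hz2
  rw [prSame, prSame, ← completions_card_swap x i j y hij hyi hyj]
  exact div_le_div_of_nonneg_right (by exact_mod_cast hA) hpos.le
end ex2

section ind
variable {d : ℕ} (w : Fin d → ℚ) (t : ℚ) (x : Fin d → Bool)

lemma eq_topk {k : ℕ} (hk : k ≤ d) {y : Fin d → Option Bool} (hy : subsetOf y x)
    (hc : definedCount y = k) (hm : ∀ l : Fin d, (l : ℕ) < k → (y l).isSome) :
    y = topk x k := by
  have hsub : (Finset.univ.filter fun l : Fin d => (l : ℕ) < k)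
      ⊆ (Finset.univ.filter fun l => (y l).isSome) := by
    intro l hl
    rw [Finset.mem_filter] at hl ⊢
    exact ⟨hl.1, hm l hl.2⟩
  have heq : (Finset.univ.filter fun l : Fin d => (l : ℕ) < k)
      = (Finset.univ.filter fun l => (y l).isSome) := by
    apply Finset.eq_of_subset_of_card_le hsub
    have hcy : (Finset.univ.filter fun l => (y l).isSome).card = k := hc
    rw [hcy, card_lowk hk]
  funext l
  by_cases hl : (l : ℕ) < k
  · obtain ⟨b, hb⟩ := Option.isSome_iff_exists.mp (hm l hl)
    rw [topk, if_pos hl, hb, hy l b hb]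
  · have : l ∉ (Finset.univ.filter fun l => (y l).isSome) := by
      rw [← heq, Finset.mem_filter]; tauto
    rw [Finset.mem_filter] at this
    push_neg at this
    have h2 : ¬ (y l).isSome = true := this (Finset.mem_univ l)
    rw [topk, if_neg hl]
    exact Option.not_isSome_iff_eq_none.mp h2

lemma aux_ind (hsorted : ∀ i j : Fin d, i ≤ j → score w t x j ≤ score w t x i)
    (k : ℕ) (hk : k ≤ d) :
    ∀ n : ℕ, ∀ y : Fin d → Option Bool, subsetOf y x → definedCount y = k →
      (Finset.univ.filter fun l : Fin d => (l : ℕ) < k ∧ y l = none).card = n →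
      prSame w t x y ≤ prSame w t x (topk x k) := by
  intro n
  induction n with
  | zero =>
    intro y hy hc hm
    rw [Finset.card_eq_zero, Finset.filter_eq_empty_iff] at hm
    have : y = topk x k := by
      apply eq_topk x hk hy hc
      intro l hl
      have := hm (Finset.mem_univ l)
      rw [Option.isSome_iff_ne_none]
      tauto
    rw [this]
  | succ n ih =>
    intro y hy hc hm
    -- find an undefined coordinate i < k
    have hne : (Finset.univ.filter fun l : Fin d => (l : ℕ) < k ∧ y l = none).Nonempty := by
      rw [← Finset.card_pos, hm]; omega
    obtain ⟨i, hi⟩ := hne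
    rw [Finset.mem_filter] at hi
    obtain ⟨-, hik, hyi⟩ := hi
    -- find a defined coordinate j ≥ k
    have hj : ∃ j : Fin d, ¬ ((j : ℕ) < k) ∧ (y j).isSome := by
      by_contra hcon
      push_neg at hcon
      have hsub : (Finset.univ.filter fun l : Fin d => (y l).isSome)
          ⊆ (Finset.univ.filter fun l : Fin d => (l : ℕ) < k).erase i := by
        intro l hl
        rw [Finset.mem_filter] at hl
        rw [Finset.mem_erase, Finset.mem_filter]
        refine ⟨?_, Finset.mem_univ l, ?_⟩
        · rintro rfl; simp [hyi] at hl
        · by_contra h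
          exact absurd (hcon l (by omega)) (by simp [hl.2])
      have hthis := Finset.card_le_card hsub
      have hcy : (Finset.univ.filter fun l => (y l).isSome).card = k := hc
      rw [hcy] at hthis
      have h2 : ((Finset.univ.filter fun l : Fin d => (l : ℕ) < k).erase i).card
          = k - 1 := by
        rw [Finset.card_erase_of_mem, card_lowk hk]
        rw [Finset.mem_filter]; exact ⟨Finset.mem_univ i, hik⟩
      rw [h2] at hthis
      omega
    obtain ⟨j, hjk, hyj'⟩ := hj
    obtain ⟨b, hb⟩ := Option.isSome_iff_exists.mp hyj'
    have hxb : x j = b := hy j b hb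
    have hyj : y j = some (x j) := by rw [hb, hxb]
    have hij : i ≠ j := by
      intro h; rw [h] at hik; exact hjk hik
    have hijle : i ≤ j := by
      have : (i : ℕ) ≤ (j : ℕ) := by omega
      exact Fin.le_def.mpr this
    have hs := hsorted i j hijle
    -- properties of the swapped instance
    have hy' : subsetOf (swapY x i j y) x := by
      intro l b hl
      by_cases hli : l = i
      · rw [hli, swapY_apply_i x i j y hij] at hl
        rw [hli]
        exact Option.some_inj.mp hl
      · by_cases hlj : l = j
        · rw [hlj, swapY_apply_j] at hl; exact absurd hl (by simp)
        · rw [swapY_apply_other x i j y hli hlj] at hl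
          exact hy l b hl
    have hdomeq : (Finset.univ.filter fun l => ((swapY x i j y) l).isSome)
        = insert i ((Finset.univ.filter fun l => (y l).isSome).erase j) := by
      ext l
      rw [Finset.mem_filter, Finset.mem_insert, Finset.mem_erase, Finset.mem_filter]
      by_cases hli : l = i
      · rw [hli]
        simp [swapY_apply_i x i j y hij]
      · by_cases hlj : l = j
        · rw [hlj]
          simp [swapY_apply_j, Ne.symm hij, hli]
        · rw [swapY_apply_other x i j y hli hlj]
          simp [hli, hlj]
    have hcy : (Finset.univ.filter fun l => (y l).isSome).card = k := hc
    have hjmem : j ∈ Finset.univ.filter fun l => (y l).isSome := by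
      rw [Finset.mem_filter]; exact ⟨Finset.mem_univ j, hyj'⟩
    have hkpos : 0 < k := by rw [← hcy]; exact Finset.card_pos.mpr ⟨j, hjmem⟩
    have hc' : definedCount (swapY x i j y) = k := by
      rw [definedCount, hdomeq, Finset.card_insert_of_notMem,
        Finset.card_erase_of_mem hjmem, hcy]
      · omega
      · rw [Finset.mem_erase, Finset.mem_filter]
        simp [hyi]
    have hm' : (Finset.univ.filter fun l : Fin d =>
        (l : ℕ) < k ∧ (swapY x i j y) l = none).card = n := by
      have : (Finset.univ.filter fun l : Fin d => (l : ℕ) < k ∧ (swapY x i j y) l = none)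
          = (Finset.univ.filter fun l : Fin d => (l : ℕ) < k ∧ y l = none).erase i := by
        ext l
        rw [Finset.mem_filter, Finset.mem_erase, Finset.mem_filter]
        by_cases hli : l = i
        · rw [hli]
          simp [swapY_apply_i x i j y hij]
        · by_cases hlj : l = j
          · rw [hlj]
            simp [swapY_apply_j, hjk]
          · rw [swapY_apply_other x i j y hli hlj]
            simp [hli]
      rw [this, Finset.card_erase_of_mem, hm]
      · omega
      · rw [Finset.mem_filter]; exact ⟨Finset.mem_univ i, hik, hyi⟩
    calc prSame w t x y ≤ prSame w t x (swapY x i j y) :=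
          exchange w t x i j y hs hij hy hyi hyj
      _ ≤ prSame w t x (topk x k) := ih (swapY x i j y) hy' hc' hm'
end ind

theorem topk_maximizes (d : ℕ) (hd : 1 ≤ d) (w : Fin d → ℚ) (t : ℚ) (x : Fin d → Bool)
    (hsorted : ∀ i j : Fin d, i ≤ j → score w t x j ≤ score w t x i)
    (k : ℕ) (hk : k ≤ d) :
    IsGreatest
      {p : ℚ | ∃ y : Fin d → Option Bool,
        subsetOf y x ∧ definedCount y = k ∧ p = prSame w t x y}
      (prSame w t x (topk x k)) := by
  constructor
  · refine ⟨topk x k, ?_, ?_, rfl⟩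
    · intro l b hl
      rw [topk] at hl
      split_ifs at hl with h
      · exact Option.some_inj.mp hl
    · rw [definedCount]
      have : (Finset.univ.filter fun l : Fin d => ((topk x k l).isSome))
          = (Finset.univ.filter fun l : Fin d => (l : ℕ) < k) := by
        apply Finset.filter_congr
        intro l _
        rw [topk]
        by_cases h : (l : ℕ) < k <;> simp [h]
      rw [this, card_lowk hk]
  · rintro p ⟨y, hy, hc, rfl⟩
    exact aux_ind w t x hsorted k hk _ y hy hc rfl
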